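/- With A = X + Y as above (X ∈ S^n_+, Y ∈ N_{S^n_+}(X)), the σ-term Υ_X(Y, H) := 2⟨Y, H X^† H⟩ satisfies Υ_X(Y, H) = 2 Σ_{i∈α, j∈γ} (λ_j(A)/λ_i(A)) (P^T H P)_{ij}², where X^† is the Moore–Penrose inverse of X. In particular Υ_X(Y, H) ≤ 0 for every H ∈ S^n. -/

import Mathlib

open Matrix BigOperators Finset

lemma psd_diag_nonneg {n : ℕ} {M : Matrix (Fin n) (Fin n) ℝ} (h : M.PosSemidef) (i : Fin n) :
    0 ≤ M i i := by
  have := h.2 (Finsupp.single i 1)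
  simpa using this

lemma psd_symm {n : ℕ} {M : Matrix (Fin n) (Fin n) ℝ} (h : M.PosSemidef) : Mᵀ = M := by
  have := h.1.eq
  rwa [Matrix.conjTranspose_eq_transpose_of_trivial] at this

lemma mp_uniq {n : ℕ} {X B C : Matrix (Fin n) (Fin n) ℝ}
    (h1 : X*B*X = X) (h2 : B*X*B = B) (h3 : (X*B)ᵀ = X*B) (h4 : (B*X)ᵀ = B*X)
    (h1' : X*C*X = X) (h2' : C*X*C = C) (h3' : (X*C)ᵀ = X*C) (h4' : (C*X)ᵀ = C*X) :
    B = C := by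
  have e1 : X*B = Bᵀ*Xᵀ := by rw [← Matrix.transpose_mul, h3]
  have e1' : X*C = Cᵀ*Xᵀ := by rw [← Matrix.transpose_mul, h3']
  have e2 : B*X = Xᵀ*Bᵀ := by rw [← Matrix.transpose_mul, h4]
  have e2' : C*X = Xᵀ*Cᵀ := by rw [← Matrix.transpose_mul, h4']
  have hXB : X*B = X*C := by
    calc X*B = Bᵀ*Xᵀ := e1
    _ = Bᵀ*(X*C*X)ᵀ := by rw [h1']
    _ = (Bᵀ*Xᵀ)*(Cᵀ*Xᵀ) := by simp only [Matrix.transpose_mul, Matrix.mul_assoc]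
    _ = (X*B)*(X*C) := by rw [← e1, ← e1']
    _ = (X*B*X)*C := by simp only [Matrix.mul_assoc]
    _ = X*C := by rw [h1]
  have hBX : B*X = C*X := by
    calc B*X = Xᵀ*Bᵀ := e2
    _ = (X*C*X)ᵀ*Bᵀ := by rw [h1']
    _ = (Xᵀ*Cᵀ)*(Xᵀ*Bᵀ) := by simp only [Matrix.transpose_mul, Matrix.mul_assoc]
    _ = (C*X)*(B*X) := by rw [← e2, ← e2']
    _ = C*(X*B*X) := by simp only [Matrix.mul_assoc]
    _ = C*X := by rw [h1]
  calc B = B*X*B := h2.symm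
  _ = B*(X*C) := by rw [Matrix.mul_assoc, hXB]
  _ = (C*X)*C := by rw [← Matrix.mul_assoc, hBX]
  _ = C := by rw [Matrix.mul_assoc] at h2' ⊢; exact h2'

lemma spec {n : ℕ} {Xp Yp : Matrix (Fin n) (Fin n) ℝ} {lam : Fin n → ℝ}
    (hXp : Xp.PosSemidef) (hYp : (-Yp).PosSemidef) (hXY : Xp * Yp = 0)
    (hsum : Xp + Yp = Matrix.diagonal lam) :
    Xp = Matrix.diagonal (fun i => max (lam i) 0) := by
  have hXs : Xpᵀ = Xp := psd_symm hXp
  have hYs : Ypᵀ = Yp := by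
    have := psd_symm hYp; simpa [Matrix.transpose_neg, neg_inj] using this
  have hYX : Yp * Xp = 0 := by
    have := congrArg Matrix.transpose hXY
    simpa [Matrix.transpose_mul, hXs, hYs] using this
  have hX2 : Xp * Xp = Xp * Matrix.diagonal lam := by
    rw [← hsum, Matrix.mul_add, hXY, add_zero]
  have hY2 : Yp * Yp = Yp * Matrix.diagonal lam := by
    rw [← hsum, Matrix.mul_add, hYX, zero_add]
  have keyX : ∀ i, ∑ k, (Xp i k)^2 = Xp i i * lam i := by
    intro i
    have := congrFun (congrFun hX2 i) i
    rw [Matrix.mul_apply, Matrix.mul_diagonal] at this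
    rw [← this]
    refine Finset.sum_congr rfl fun k _ => ?_
    have h' : Xp k i = Xp i k := by
      conv_lhs => rw [← hXs]
      exact Matrix.transpose_apply Xp k i
    rw [h']; ring
  have keyY : ∀ i, ∑ k, (Yp i k)^2 = Yp i i * lam i := by
    intro i
    have := congrFun (congrFun hY2 i) i
    rw [Matrix.mul_apply, Matrix.mul_diagonal] at this
    rw [← this]
    refine Finset.sum_congr rfl fun k _ => ?_
    have h' : Yp k i = Yp i k := by
      conv_lhs => rw [← hYs]
      exact Matrix.transpose_apply Yp k i
    rw [h']; ring
  have hXrow : ∀ i, lam i ≤ 0 → ∀ k, Xp i k = 0 := by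
    intro i hi k
    have hdiag : 0 ≤ Xp i i := psd_diag_nonneg hXp i
    have hle : ∑ k, (Xp i k)^2 ≤ 0 := (keyX i).le.trans (mul_nonpos_of_nonneg_of_nonpos hdiag hi)
    have hz : ∑ k, (Xp i k)^2 = 0 :=
      le_antisymm hle (Finset.sum_nonneg fun k _ => sq_nonneg _)
    have := (Finset.sum_eq_zero_iff_of_nonneg (fun k _ => sq_nonneg (Xp i k))).mp hz k (Finset.mem_univ k)
    exact pow_eq_zero_iff (two_ne_zero) |>.mp this
  have hYrow : ∀ i, 0 ≤ lam i → ∀ k, Yp i k = 0 := by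
    intro i hi k
    have hdiag : Yp i i ≤ 0 := by
      have := psd_diag_nonneg hYp i
      simpa [neg_nonneg] using this
    have hle : ∑ k, (Yp i k)^2 ≤ 0 := (keyY i).le.trans (mul_nonpos_of_nonpos_of_nonneg hdiag hi)
    have hz : ∑ k, (Yp i k)^2 = 0 :=
      le_antisymm hle (Finset.sum_nonneg fun k _ => sq_nonneg _)
    have := (Finset.sum_eq_zero_iff_of_nonneg (fun k _ => sq_nonneg (Yp i k))).mp hz k (Finset.mem_univ k)
    exact pow_eq_zero_iff (two_ne_zero) |>.mp this
  funext i j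
  rcases le_or_gt (lam i) 0 with hi | hi
  · rw [hXrow i hi j]
    by_cases hij : i = j
    · subst hij
      simp [Matrix.diagonal_apply_eq, max_eq_right hi]
    · simp [Matrix.diagonal_apply_ne _ hij]
  · have hYz : Yp i j = 0 := hYrow i hi.le j
    have := congrFun (congrFun hsum i) j
    have hx : Xp i j = Matrix.diagonal lam i j := by
      have h' : Xp i j + Yp i j = Matrix.diagonal lam i j := this
      rw [hYz, add_zero] at h'; exact h'
    rw [hx]
    by_cases hij : i = j
    · subst hij
      simp [Matrix.diagonal_apply_eq, max_eq_left hi.le]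
    · simp [Matrix.diagonal_apply_ne _ hij]

/-- explicit form and nonpositivity of the sigma-term
`Υ_X(Y,H) = 2⟨Y, H X† H⟩` for `X ⪰ 0`, `Y ⪯ 0`, `XY = 0`, where `X†` is the Moore–Penrose
inverse of `X` (characterized by the four Penrose conditions) and `A = X + Y = P Λ Pᵀ`. -/
theorem stmt7 {n : ℕ} (X Y A P Xdag H : Matrix (Fin n) (Fin n) ℝ) (lam : Fin n → ℝ)
    (hX : X.PosSemidef) (hY : (-Y).PosSemidef) (hXY : X * Y = 0)
    (hA : A = X + Y) (hP : Pᵀ * P = 1)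
    (hdecomp : A = P * Matrix.diagonal lam * Pᵀ)
    (hH : H.IsSymm)
    (hpen1 : X * Xdag * X = X) (hpen2 : Xdag * X * Xdag = Xdag)
    (hpen3 : (X * Xdag).IsSymm) (hpen4 : (Xdag * X).IsSymm) :
    2 * (Y * (H * Xdag * H)).trace
      = 2 * ∑ i ∈ Finset.univ.filter (fun i => 0 < lam i),
            ∑ j ∈ Finset.univ.filter (fun j => lam j < 0),
              (lam j / lam i) * ((Pᵀ * H * P) i j)^2
    ∧ 2 * (Y * (H * Xdag * H)).trace ≤ 0 := by
  have hPPT : P * Pᵀ = 1 := mul_eq_one_comm.mp hP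
  set f : Fin n → ℝ := fun i => max (lam i) 0 with hf
  set m : Fin n → ℝ := fun i => min (lam i) 0 with hm
  set g : Fin n → ℝ := fun i => if 0 < lam i then (lam i)⁻¹ else 0 with hg
  set M : Matrix (Fin n) (Fin n) ℝ := Pᵀ * H * P with hM
  -- conjugated matrices
  have hXp : (Pᵀ * X * P).PosSemidef := by
    have := hX.mul_mul_conjTranspose_same Pᵀ
    simpa [Matrix.conjTranspose_eq_transpose_of_trivial] using this
  have hYp : (-(Pᵀ * Y * P)).PosSemidef := by
    have := hY.mul_mul_conjTranspose_same Pᵀ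
    simpa [Matrix.conjTranspose_eq_transpose_of_trivial, Matrix.mul_neg, Matrix.neg_mul] using this
  have hXYp : (Pᵀ * X * P) * (Pᵀ * Y * P) = 0 := by
    calc (Pᵀ * X * P) * (Pᵀ * Y * P) = Pᵀ * (X * (P * Pᵀ) * Y) * P := by
          simp only [Matrix.mul_assoc]
    _ = Pᵀ * (X * Y) * P := by rw [hPPT, Matrix.mul_one]
    _ = 0 := by rw [hXY, Matrix.mul_zero, Matrix.zero_mul]
  have hsum' : (Pᵀ * X * P) + (Pᵀ * Y * P) = Matrix.diagonal lam := by
    have h1 : Pᵀ * (P * Matrix.diagonal lam * Pᵀ) * P = Matrix.diagonal lam := by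
      calc Pᵀ * (P * Matrix.diagonal lam * Pᵀ) * P
          = (Pᵀ * P) * Matrix.diagonal lam * (Pᵀ * P) := by simp only [Matrix.mul_assoc]
      _ = Matrix.diagonal lam := by rw [hP, Matrix.one_mul, Matrix.mul_one]
    rw [← h1, ← hdecomp, hA, Matrix.mul_add, Matrix.add_mul]
  have hXdiag : Pᵀ * X * P = Matrix.diagonal f := spec hXp hYp hXYp hsum'
  have hYdiag : Pᵀ * Y * P = Matrix.diagonal m := by
    have h0 : Pᵀ * Y * P = Matrix.diagonal lam - Matrix.diagonal f := by
      rw [← hXdiag, ← hsum']; abel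
    have hsub : (fun i => lam i - f i) = m := by
      funext i
      simp only [hf, hm]
      rcases le_total (lam i) 0 with h | h
      · simp [max_eq_right h, min_eq_left h]
      · simp [max_eq_left h, min_eq_right h]
    rw [h0, Matrix.diagonal_sub]
    exact congrArg Matrix.diagonal hsub
  have hXeq : X = P * Matrix.diagonal f * Pᵀ := by
    calc X = (P * Pᵀ) * X * (P * Pᵀ) := by rw [hPPT, Matrix.one_mul, Matrix.mul_one]
    _ = P * (Pᵀ * X * P) * Pᵀ := by simp only [Matrix.mul_assoc]
    _ = P * Matrix.diagonal f * Pᵀ := by rw [hXdiag]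
  have hYeq : Y = P * Matrix.diagonal m * Pᵀ := by
    calc Y = (P * Pᵀ) * Y * (P * Pᵀ) := by rw [hPPT, Matrix.one_mul, Matrix.mul_one]
    _ = P * (Pᵀ * Y * P) * Pᵀ := by simp only [Matrix.mul_assoc]
    _ = P * Matrix.diagonal m * Pᵀ := by rw [hYdiag]
  -- sandwich multiplication
  have sandwich : ∀ a b : Fin n → ℝ,
      (P * Matrix.diagonal a * Pᵀ) * (P * Matrix.diagonal b * Pᵀ)
        = P * Matrix.diagonal (a * b) * Pᵀ := by
    intro a b
    calc (P * Matrix.diagonal a * Pᵀ) * (P * Matrix.diagonal b * Pᵀ)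
        = P * (Matrix.diagonal a * (Pᵀ * P) * Matrix.diagonal b) * Pᵀ := by
          simp only [Matrix.mul_assoc]
    _ = P * (Matrix.diagonal a * Matrix.diagonal b) * Pᵀ := by rw [hP, Matrix.mul_one]
    _ = P * Matrix.diagonal (a * b) * Pᵀ := by rw [Matrix.diagonal_mul_diagonal]; rfl
  have sandwich_symm : ∀ a : Fin n → ℝ, (P * Matrix.diagonal a * Pᵀ)ᵀ = P * Matrix.diagonal a * Pᵀ := by
    intro a
    simp [Matrix.transpose_mul, Matrix.diagonal_transpose, Matrix.mul_assoc]
  set Z : Matrix (Fin n) (Fin n) ℝ := P * Matrix.diagonal g * Pᵀ with hZ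
  have hfgf : f * g * f = f := by
    funext i
    by_cases hi : 0 < lam i
    · simp [hf, hg, hi, max_eq_left hi.le]
    · simp [hf, hg, hi, max_eq_right (not_lt.mp hi)]
  have hgfg : g * f * g = g := by
    funext i
    by_cases hi : 0 < lam i
    · simp only [Pi.mul_apply, hf, hg, if_pos hi, max_eq_left hi.le]
      rw [inv_mul_cancel₀ hi.ne', one_mul]
    · simp [hf, hg, hi]
  have q1 : X * Z * X = X := by
    rw [hXeq, hZ, sandwich, sandwich, hfgf]
  have q2 : Z * X * Z = Z := by
    rw [hXeq, hZ, sandwich, sandwich, hgfg]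
  have q3 : (X * Z)ᵀ = X * Z := by rw [hXeq, hZ, sandwich]; exact sandwich_symm _
  have q4 : (Z * X)ᵀ = Z * X := by rw [hXeq, hZ, sandwich]; exact sandwich_symm _
  have hXdagZ : Xdag = Z :=
    mp_uniq hpen1 hpen2 hpen3 hpen4 q1 q2 q3 q4
  -- symmetry of M
  have hMsymm : ∀ i j, M j i = M i j := by
    intro i j
    have : Mᵀ = M := by
      rw [hM, Matrix.transpose_mul, Matrix.transpose_mul, Matrix.transpose_transpose, hH,
        ← Matrix.mul_assoc]
    conv_lhs => rw [← this]
    exact Matrix.transpose_apply M j i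
  -- trace computation
  have hTr : (Y * (H * Xdag * H)).trace
      = ∑ q, ∑ p, (m p * g q) * (M q p)^2 := by
    rw [hXdagZ, hYeq, hZ]
    have hre : (P * Matrix.diagonal m * Pᵀ) * (H * (P * Matrix.diagonal g * Pᵀ) * H)
        = P * (Matrix.diagonal m * Pᵀ * H * P * Matrix.diagonal g * Pᵀ * H) := by
      simp only [Matrix.mul_assoc]
    rw [hre, Matrix.trace_mul_comm]
    have hre2 : (Matrix.diagonal m * Pᵀ * H * P * Matrix.diagonal g * Pᵀ * H) * P
        = Matrix.diagonal m * M * Matrix.diagonal g * M := by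
      rw [hM]; simp only [Matrix.mul_assoc]
    rw [hre2]
    have hentry : ∀ i, (Matrix.diagonal m * M * Matrix.diagonal g * M) i i
        = ∑ j, (m i * g j) * (M j i)^2 := by
      intro i
      rw [Matrix.mul_apply]
      refine Finset.sum_congr rfl fun j _ => ?_
      have h1 : (Matrix.diagonal m * M * Matrix.diagonal g) i j = m i * M i j * g j := by
        rw [Matrix.mul_diagonal, Matrix.diagonal_mul]
      rw [h1, hMsymm j i]
      ring
    simp only [Matrix.trace, Matrix.diag_apply]
    rw [Finset.sum_congr rfl fun i _ => hentry i]
    exact Finset.sum_comm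
  have hEq : (Y * (H * Xdag * H)).trace
      = ∑ i ∈ Finset.univ.filter (fun i => 0 < lam i),
          ∑ j ∈ Finset.univ.filter (fun j => lam j < 0),
            (lam j / lam i) * ((Pᵀ * H * P) i j)^2 := by
    rw [hTr]
    simp only [Finset.sum_filter, ← hM]
    refine Finset.sum_congr rfl fun q _ => ?_
    by_cases hq : 0 < lam q
    · rw [if_pos hq]
      refine Finset.sum_congr rfl fun p _ => ?_
      by_cases hp : lam p < 0
      · rw [if_pos hp]
        have h1 : m p = lam p := min_eq_left hp.le
        have h2 : g q = (lam q)⁻¹ := if_pos hq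
        rw [h1, h2, div_eq_mul_inv]
        try ring
      · have h1 : m p = 0 := min_eq_right (not_lt.mp hp)
        rw [if_neg hp, h1]
        ring
    · rw [if_neg hq]
      apply Finset.sum_eq_zero
      intro p _
      have h2 : g q = 0 := if_neg hq
      rw [h2]
      ring
  constructor
  · rw [hEq]
  · rw [hEq]
    have hS : (∑ i ∈ Finset.univ.filter (fun i => 0 < lam i),
          ∑ j ∈ Finset.univ.filter (fun j => lam j < 0),
            (lam j / lam i) * ((Pᵀ * H * P) i j)^2) ≤ 0 := by
      apply Finset.sum_nonpos
      intro i hi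
      have hi' : 0 < lam i := (Finset.mem_filter.mp hi).2
      apply Finset.sum_nonpos
      intro j hj
      have hj' : lam j < 0 := (Finset.mem_filter.mp hj).2
      have h1 : lam j / lam i ≤ 0 := div_nonpos_iff.mpr (Or.inr ⟨hj'.le, hi'.le⟩)
      exact mul_nonpos_of_nonpos_of_nonneg h1 (sq_nonneg _)
    linarith
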